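/- arXiv:2603.21485 — 2 statements merged into one kernel-verified Lean document; each statement's English description precedes it below -/
import Mathlib

section
/- For an arbitrary weight function v : 𝒳 → 𝒜 → ℝ, under the independence of potential rewards condition and the click–reward factorization condition, the expectation over one logged sample of the weighted click-reward sum marginalizes to the logging-policy click probabilities: E_{x∼p, A∼π₀(x), ω∼κ(x,A)}[ ∑_{a∈𝒜} v(x,a)·C(ω,a)·R(ω,a) ] = E_{x∼p}[ ∑_{a∈𝒜} v(x,a)·p_c(x,a,π₀)·q_r(x,a) ]. -/
open scoped BigOperators Classical

/-- Expectation of a real-valued function under a PMF on a finite type. -/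
noncomputable def pexp {X : Type*} [Fintype X] (p : PMF X) (f : X → ℝ) : ℝ :=
  ∑ x, (p x).toReal * f x

/-- Variance of a real-valued function under a PMF on a finite type. -/
noncomputable def pvar {X : Type*} [Fintype X] (p : PMF X) (f : X → ℝ) : ℝ :=
  pexp p (fun x => (f x - pexp p f) ^ 2)

/-- Joint distribution of one logged sample (x, A, ω) with x ∼ p, A ∼ π₀(x), ω ∼ κ(x,A). -/
noncomputable def logged {𝒳 ℛ Ω : Type*} (p : PMF 𝒳) (π₀ : 𝒳 → PMF ℛ)
    (κ : 𝒳 → ℛ → PMF Ω) : PMF (𝒳 × ℛ × Ω) :=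
  p.bind fun x => (π₀ x).bind fun A => (κ x A).map fun ω => (x, A, ω)

/-- Click probability of action a at context x given ranking A: p_c(x,a,A). -/
noncomputable def pcA {𝒳 ℛ Ω 𝒜 : Type*} [Fintype Ω]
    (κ : 𝒳 → ℛ → PMF Ω) (C : Ω → 𝒜 → ℝ) (x : 𝒳) (a : 𝒜) (A : ℛ) : ℝ :=
  pexp (κ x A) fun ω => C ω a

/-- Marginalized click probability of action a at context x under policy μ: p_c(x,a,μ). -/
noncomputable def pcPol {𝒳 ℛ Ω 𝒜 : Type*} [Fintype Ω] [Fintype ℛ]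
    (κ : 𝒳 → ℛ → PMF Ω) (C : Ω → 𝒜 → ℝ) (μ : 𝒳 → PMF ℛ) (x : 𝒳) (a : 𝒜) : ℝ :=
  pexp (μ x) fun A => pcA κ C x a A

/-- Policy value V(π). -/
noncomputable def polValue {𝒳 ℛ Ω 𝒜 : Type*} [Fintype 𝒳] [Fintype ℛ] [Fintype Ω] [Fintype 𝒜]
    (p : PMF 𝒳) (π : 𝒳 → PMF ℛ) (κ : 𝒳 → ℛ → PMF Ω) (C R : Ω → 𝒜 → ℝ) : ℝ :=
  pexp p fun x => pexp (π x) fun A => pexp (κ x A) fun ω => ∑ a, C ω a * R ω a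

lemma pexp_bind {X Y : Type*} [Fintype X] [Fintype Y] (p : PMF X) (q : X → PMF Y)
    (f : Y → ℝ) : pexp (p.bind q) f = ∑ x, (p x).toReal * pexp (q x) f := by
  unfold pexp
  have h : ∀ y, ((p.bind q) y).toReal = ∑ x, (p x).toReal * (q x y).toReal := by
    intro y
    rw [PMF.bind_apply, tsum_fintype, ENNReal.toReal_sum]
    · exact Finset.sum_congr rfl fun x _ => ENNReal.toReal_mul
    · intro x _
      exact ENNReal.mul_ne_top (PMF.apply_ne_top p x) (PMF.apply_ne_top (q x) y)
  simp_rw [h, Finset.sum_mul, Finset.mul_sum]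
  rw [Finset.sum_comm]
  apply Finset.sum_congr rfl; intro x _
  apply Finset.sum_congr rfl; intro y _
  ring

lemma pexp_pure {X : Type*} [Fintype X] (a : X) (f : X → ℝ) :
    pexp (PMF.pure a) f = f a := by
  unfold pexp
  rw [Finset.sum_eq_single a]
  · simp
  · intro b _ hb; simp [PMF.pure_apply, hb]
  · simp

lemma pexp_map {X Y : Type*} [Fintype X] [Fintype Y] (p : PMF X) (g : X → Y)
    (f : Y → ℝ) : pexp (p.map g) f = pexp p (fun x => f (g x)) := by
  simp [PMF.map, pexp_bind, pexp_pure, Function.comp]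
  rfl

/-- For an arbitrary weight function v, the logged-sample expectation of the weighted
click-reward sum marginalizes to the logging-policy click probabilities. -/
theorem weighted_sum_marginalizes {𝒳 ℛ Ω 𝒜 : Type*}
    [Fintype 𝒳] [Nonempty 𝒳] [Fintype ℛ] [Nonempty ℛ] [Fintype Ω] [Nonempty Ω] [Fintype 𝒜]
    (p : PMF 𝒳) (π π₀ : 𝒳 → PMF ℛ) (κ : 𝒳 → ℛ → PMF Ω)
    (C R : Ω → 𝒜 → ℝ) (hC : ∀ ω a, C ω a = 0 ∨ C ω a = 1)
    (q_r : 𝒳 → 𝒜 → ℝ)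
    (hind : ∀ x a A, pexp (κ x A) (fun ω => R ω a) = q_r x a)
    (hfact : ∀ x a A,
      pexp (κ x A) (fun ω => C ω a * R ω a) = pcA κ C x a A * q_r x a)
    (v : 𝒳 → 𝒜 → ℝ) :
    pexp (logged p π₀ κ)
        (fun s => ∑ a, v s.1 a * C s.2.2 a * R s.2.2 a)
    = pexp p (fun x => ∑ a, v x a * pcPol κ C π₀ x a * q_r x a) := by
  rw [logged, pexp_bind]
  apply Finset.sum_congr rfl; intro x _
  congr 1
  rw [pexp_bind]
  have key : ∀ A, pexp ((κ x A).map fun ω => (x, A, ω))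
      (fun s => ∑ a, v s.1 a * C s.2.2 a * R s.2.2 a)
      = ∑ a, v x a * pcA κ C x a A * q_r x a := by
    intro A
    rw [pexp_map]
    unfold pexp
    simp only [Finset.mul_sum]
    rw [Finset.sum_comm]
    apply Finset.sum_congr rfl; intro a _
    have h := hfact x a A
    unfold pexp at h
    calc ∑ ω, ((κ x A) ω).toReal * (v x a * C ω a * R ω a)
        = v x a * ∑ ω, ((κ x A) ω).toReal * (C ω a * R ω a) := by
          rw [Finset.mul_sum]; apply Finset.sum_congr rfl; intro ω _; ring
      _ = v x a * pcA κ C x a A * q_r x a := by rw [h]; ring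
  simp_rw [key]
  have hpc : ∀ a, pcPol κ C π₀ x a = ∑ A, ((π₀ x) A).toReal * pcA κ C x a A := fun a => rfl
  simp_rw [hpc, Finset.mul_sum, Finset.sum_mul]
  rw [Finset.sum_comm]
  apply Finset.sum_congr rfl; intro A _
  apply Finset.sum_congr rfl; intro a _
  ring
end

section
/- Given any reward model q̂_r : 𝒳 → 𝒜 → ℝ, define the single-sample CDR value f_CDR(x,A,ω) := ∑_{a∈𝒜} [ w(x,a)·( C(ω,a)·R(ω,a) − p_c(x,a,A)·q̂_r(x,a) ) + p_c(x,a,π)·q̂_r(x,a) ], where w(x,a) := p_c(x,a,π)/p_c(x,a,π₀) with the convention t/0 := 0. Under the independence of potential rewards condition, the click–reward factorization condition, and the click-wise common support condition, for every fixed context x ∈ 𝒳 the conditional expectation of the CDR value is model-free: E_{A∼π₀(x), ω∼κ(x,A)}[f_CDR(x,A,ω)] = ∑_{a∈𝒜} p_c(x,a,π)·q_r(x,a). -/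
open scoped BigOperators Classical

lemma pexp_sum_one {X : Type*} [Fintype X] (p : PMF X) :
    ∑ x, (p x).toReal = 1 := by
  have h := p.tsum_coe
  rw [tsum_fintype] at h
  have := congrArg ENNReal.toReal h
  rwa [ENNReal.toReal_sum (fun x _ => p.apply_ne_top x), ENNReal.toReal_one] at this

lemma pexp_const {X : Type*} [Fintype X] (p : PMF X) (c : ℝ) :
    pexp p (fun _ => c) = c := by
  simp [pexp, ← Finset.sum_mul, pexp_sum_one]

lemma pexp_add {X : Type*} [Fintype X] (p : PMF X) (f g : X → ℝ) :
    pexp p (fun x => f x + g x) = pexp p f + pexp p g := by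
  simp [pexp, mul_add, Finset.sum_add_distrib]

lemma pexp_sub {X : Type*} [Fintype X] (p : PMF X) (f g : X → ℝ) :
    pexp p (fun x => f x - g x) = pexp p f - pexp p g := by
  simp [pexp, mul_sub, Finset.sum_sub_distrib]

lemma pexp_const_mul {X : Type*} [Fintype X] (p : PMF X) (c : ℝ) (f : X → ℝ) :
    pexp p (fun x => c * f x) = c * pexp p f := by
  simp [pexp, Finset.mul_sum]
  exact Finset.sum_congr rfl fun x _ => by ring

lemma pexp_mul_const {X : Type*} [Fintype X] (p : PMF X) (c : ℝ) (f : X → ℝ) :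
    pexp p (fun x => f x * c) = pexp p f * c := by
  simp [pexp, Finset.sum_mul]
  exact Finset.sum_congr rfl fun x _ => by ring

lemma pexp_finset_sum {X 𝒜 : Type*} [Fintype X] [Fintype 𝒜] (p : PMF X)
    (f : 𝒜 → X → ℝ) :
    pexp p (fun x => ∑ a, f a x) = ∑ a, pexp p (f a) := by
  simp [pexp, Finset.mul_sum]
  exact Finset.sum_comm

lemma pexp_nonneg {X : Type*} [Fintype X] (p : PMF X) (f : X → ℝ)
    (hf : ∀ x, 0 ≤ f x) : 0 ≤ pexp p f :=
  Finset.sum_nonneg fun x _ => mul_nonneg ENNReal.toReal_nonneg (hf x)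

/-- For every fixed context x, the conditional expectation of the CDR value is
model-free. -/
theorem CDR_conditional_expectation {𝒳 ℛ Ω 𝒜 : Type*}
    [Fintype 𝒳] [Nonempty 𝒳] [Fintype ℛ] [Nonempty ℛ] [Fintype Ω] [Nonempty Ω] [Fintype 𝒜]
    (π π₀ : 𝒳 → PMF ℛ) (κ : 𝒳 → ℛ → PMF Ω)
    (C R : Ω → 𝒜 → ℝ) (hC : ∀ ω a, C ω a = 0 ∨ C ω a = 1)
    (q_r : 𝒳 → 𝒜 → ℝ)
    (hind : ∀ x a A, pexp (κ x A) (fun ω => R ω a) = q_r x a)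
    (hfact : ∀ x a A,
      pexp (κ x A) (fun ω => C ω a * R ω a) = pcA κ C x a A * q_r x a)
    (hsupp : ∀ x a, 0 < pcPol κ C π x a → 0 < pcPol κ C π₀ x a)
    (qhat : 𝒳 → 𝒜 → ℝ) :
    ∀ x : 𝒳,
      pexp (π₀ x) (fun A => pexp (κ x A) (fun ω => ∑ a,
        ((pcPol κ C π x a / pcPol κ C π₀ x a) *
            (C ω a * R ω a - pcA κ C x a A * qhat x a)
          + pcPol κ C π x a * qhat x a)))
      = ∑ a, pcPol κ C π x a * q_r x a := by
  intro x
  have hinner : ∀ A : ℛ,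
      pexp (κ x A) (fun ω => ∑ a,
        ((pcPol κ C π x a / pcPol κ C π₀ x a) *
            (C ω a * R ω a - pcA κ C x a A * qhat x a)
          + pcPol κ C π x a * qhat x a))
      = ∑ a, ((pcPol κ C π x a / pcPol κ C π₀ x a) *
            (pcA κ C x a A * q_r x a - pcA κ C x a A * qhat x a)
          + pcPol κ C π x a * qhat x a) := by
    intro A
    rw [pexp_finset_sum]
    refine Finset.sum_congr rfl fun a _ => ?_
    rw [pexp_add, pexp_const_mul, pexp_sub, pexp_const, hfact,
      pexp_const]
  have hstep : pexp (π₀ x) (fun A => pexp (κ x A) (fun ω => ∑ a,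
        ((pcPol κ C π x a / pcPol κ C π₀ x a) *
            (C ω a * R ω a - pcA κ C x a A * qhat x a)
          + pcPol κ C π x a * qhat x a)))
      = ∑ a, ((pcPol κ C π x a / pcPol κ C π₀ x a) *
            (pcPol κ C π₀ x a * q_r x a - pcPol κ C π₀ x a * qhat x a)
          + pcPol κ C π x a * qhat x a) := by
    calc pexp (π₀ x) (fun A => pexp (κ x A) (fun ω => ∑ a,
        ((pcPol κ C π x a / pcPol κ C π₀ x a) *
            (C ω a * R ω a - pcA κ C x a A * qhat x a)
          + pcPol κ C π x a * qhat x a)))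
        = pexp (π₀ x) (fun A => ∑ a, ((pcPol κ C π x a / pcPol κ C π₀ x a) *
            (pcA κ C x a A * q_r x a - pcA κ C x a A * qhat x a)
          + pcPol κ C π x a * qhat x a)) := by
          exact congrArg _ (funext hinner)
      _ = ∑ a, ((pcPol κ C π x a / pcPol κ C π₀ x a) *
            (pcPol κ C π₀ x a * q_r x a - pcPol κ C π₀ x a * qhat x a)
          + pcPol κ C π x a * qhat x a) := by
          rw [pexp_finset_sum]
          refine Finset.sum_congr rfl fun a _ => ?_
          rw [pexp_add, pexp_const_mul, pexp_sub, pexp_mul_const, pexp_mul_const,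
            pexp_const]
          rfl
  rw [hstep]
  refine Finset.sum_congr rfl fun a _ => ?_
  have hnn : 0 ≤ pcPol κ C π x a := by
    refine pexp_nonneg _ _ fun A => pexp_nonneg _ _ fun ω => ?_
    rcases hC ω a with h | h <;> simp [h]
  rcases eq_or_lt_of_le hnn with h0 | hpos
  · rw [← h0]; ring
  · have h₀ := hsupp x a hpos
    field_simp
    ring
end
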